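/- Converse part of Theorem 1: Let n, k, l, d, s, m be positive integers with s < n, d ≤ k, and m ∣ l. If there exists a gradient coding scheme with parameters (n, k, l, d, s, m), then d·n ≥ k·(s + m) (equivalently, d/k ≥ (s+m)/n). -/

import Mathlib

/-- A gradient coding scheme with parameters `(n, k, l, d, s, m)`:
assignment sets `S i ⊆ Fin k` of size at most `d`; linear encoding maps
`f i : (ℝ^l)^k →ₗ ℝ^(l/m)` depending only on the coordinates in `S i`;
and for every set `F` of `n - s` workers a recovery map `r` reconstructing
the sum `∑ j, g j` from the outputs of the workers in `F`. -/
def IsGradientCodingScheme (n k l d s m : ℕ) : Prop :=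
  ∃ (S : Fin n → Finset (Fin k))
    (f : Fin n → ((Fin k → Fin l → ℝ) →ₗ[ℝ] (Fin (l / m) → ℝ))),
    (∀ i, (S i).card ≤ d) ∧
    (∀ i (g g' : Fin k → Fin l → ℝ), (∀ j ∈ S i, g j = g' j) → f i g = f i g') ∧
    (∀ F : Finset (Fin n), F.card = n - s →
      ∃ r : (F → Fin (l / m) → ℝ) → (Fin l → ℝ),
        ∀ g : Fin k → Fin l → ℝ, r (fun i => f i.1 g) = ∑ j : Fin k, g j)

/-- Converse part of Theorem 1: if a gradient coding scheme with parameters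
`(n, k, l, d, s, m)` exists, then `d·n ≥ k·(s + m)`. -/
theorem converse_gradient_coding'
    (n k l d s m : ℕ) (hn : 0 < n) (hk : 0 < k) (hl : 0 < l) (hd : 0 < d)
    (hs : 0 < s) (hm : 0 < m) (hsn : s < n) (hdk : d ≤ k) (hml : m ∣ l)
    (S : Fin n → Finset (Fin k))
    (f : Fin n → ((Fin k → Fin l → ℝ) →ₗ[ℝ] (Fin (l / m) → ℝ)))
    (hSd : ∀ i, (S i).card ≤ d)
    (hdep : ∀ i (g g' : Fin k → Fin l → ℝ), (∀ j ∈ S i, g j = g' j) → f i g = f i g')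
    (hrec : ∀ F : Finset (Fin n), F.card = n - s →
      ∃ r : (F → Fin (l / m) → ℝ) → (Fin l → ℝ),
        ∀ g : Fin k → Fin l → ℝ, r (fun i => f i.1 g) = ∑ j : Fin k, g j) :
    k * (s + m) ≤ d * n := by
  have key : ∀ j : Fin k, s + m ≤ (Finset.univ.filter (fun i => j ∈ S i)).card := by
    intro j
    by_contra hlt
    push_neg at hlt
    set Tj := Finset.univ.filter (fun i : Fin n => j ∈ S i) with hTj
    obtain ⟨B, hBcard, hAm⟩ : ∃ B : Finset (Fin n), B.card = s ∧ (Tj \ B).card < m := by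
      by_cases hc : Tj.card ≤ s
      · obtain ⟨B, hTB, hB⟩ := Finset.exists_superset_card_eq hc (by simpa using hsn.le)
        exact ⟨B, hB, by rw [Finset.sdiff_eq_empty_iff_subset.2 hTB]; simpa using hm⟩
      · obtain ⟨B, hBT, hB⟩ := Finset.exists_subset_card_eq (s := Tj) (n := s) (le_of_not_ge hc)
        refine ⟨B, hB, ?_⟩
        rw [Finset.card_sdiff_of_subset hBT, hB]
        omega
    have hFcard : (Bᶜ : Finset (Fin n)).card = n - s := by
      rw [Finset.card_compl, hBcard, Fintype.card_fin]
    obtain ⟨r, hr⟩ := hrec Bᶜ hFcard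
    set A := Tj \ B with hA
    set Φ : (Fin l → ℝ) →ₗ[ℝ] (↥A → Fin (l / m) → ℝ) :=
      LinearMap.pi (fun i : ↥A =>
        (f i.1).comp (LinearMap.single ℝ (fun _ : Fin k => Fin l → ℝ) j)) with hΦ
    have hsum : ∀ x : Fin l → ℝ, (∑ j' : Fin k, Pi.single j x j') = x := by
      intro x
      rw [Finset.sum_pi_single']
      simp
    have hinj : Function.Injective Φ := by
      intro x x' hxx
      have hfun : (fun i : ↥(Bᶜ : Finset (Fin n)) => f i.1 (Pi.single j x))
          = (fun i : ↥(Bᶜ : Finset (Fin n)) => f i.1 (Pi.single j x')) := by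
        funext i
        by_cases hi : (i : Fin n) ∈ Tj
        · have hiA : (i : Fin n) ∈ A := by
            rw [hA, Finset.mem_sdiff]
            exact ⟨hi, Finset.mem_compl.1 i.2⟩
          have := congrFun hxx ⟨i.1, hiA⟩
          simpa [hΦ] using this
        · refine hdep i.1 _ _ fun j' hj' => ?_
          have hne : j' ≠ j := by
            rintro rfl
            exact hi (Finset.mem_filter.2 ⟨Finset.mem_univ _, hj'⟩)
          rw [Pi.single_eq_of_ne hne, Pi.single_eq_of_ne hne]
      have hx : x = x' := by
        have h1 := hr (Pi.single j x)
        have h2 := hr (Pi.single j x')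
        rw [hsum] at h1 h2
        rw [← h1, ← h2, hfun]
      exact hx
    have hle := LinearMap.finrank_le_finrank_of_injective hinj
    rw [Module.finrank_fin_fun, Module.finrank_pi_fintype] at hle
    simp only [Module.finrank_fin_fun, Finset.sum_const, Finset.card_univ,
      Fintype.card_coe, smul_eq_mul] at hle
    have hlm : 0 < l / m := Nat.div_pos (Nat.le_of_dvd hl hml) hm
    have h1 : A.card * (l / m) ≤ (m - 1) * (l / m) :=
      Nat.mul_le_mul_right _ (by omega)
    have h2 : (m - 1) * (l / m) < l := by
      calc (m - 1) * (l / m) = m * (l / m) - l / m := by rw [Nat.sub_mul, one_mul]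
        _ = l - l / m := by rw [Nat.mul_div_cancel' hml]
        _ < l := Nat.sub_lt hl hlm
    omega
  have hcount : ∑ i : Fin n, (S i).card
      = ∑ j : Fin k, (Finset.univ.filter (fun i => j ∈ S i)).card := by
    simp only [Finset.card_filter]
    rw [Finset.sum_comm]
    refine Finset.sum_congr rfl fun i _ => ?_
    rw [← Finset.filter_univ_mem (S i), Finset.card_filter]
    simp [Finset.mem_filter]
  calc k * (s + m) = ∑ _j : Fin k, (s + m) := by simp [mul_comm]
    _ ≤ ∑ j : Fin k, (Finset.univ.filter (fun i => j ∈ S i)).card :=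
        Finset.sum_le_sum fun j _ => key j
    _ = ∑ i : Fin n, (S i).card := hcount.symm
    _ ≤ ∑ _i : Fin n, d := Finset.sum_le_sum fun i _ => hSd i
    _ = d * n := by simp [mul_comm]

theorem converse_gradient_coding
    (n k l d s m : ℕ) (hn : 0 < n) (hk : 0 < k) (hl : 0 < l) (hd : 0 < d)
    (hs : 0 < s) (hm : 0 < m) (hsn : s < n) (hdk : d ≤ k) (hml : m ∣ l)
    (h : IsGradientCodingScheme n k l d s m) :
    k * (s + m) ≤ d * n := by
  obtain ⟨S, f, hSd, hdep, hrec⟩ := h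
  exact converse_gradient_coding' n k l d s m hn hk hl hd hs hm hsn hdk hml S f hSd hdep hrec
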